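/- Suppose φ : ℝ^{n_p} × ℝ^{d'} → ℝ^{d'} is such that the Jacobian d_γ φ is invertible at a point (p₀, γ₀) with φ(p₀, γ₀) = 0, so that near p₀ the equation φ(p, γ) = 0 defines γ as a function γ(p) of p. For a given differentiable function C : ℝ^{n_p} × ℝ^{d'} → ℝ, define Φ(p) := C(p, γ(p)) and the Lagrangian L(p, γ, λ) := C(p, γ) + ⟨φ(p, γ), λ⟩. Then the Euclidean gradient of Φ at p₀ is ∂Φ(p₀) = ∂_p L(p₀, γ₀, λ₀), where γ₀ = γ(p₀) and λ₀ ∈ ℝ^{d'} are uniquely determined by the equations 0 = ∂_λ L(p₀, γ₀, λ₀) = φ(p₀, γ₀) and 0 = ∂_γ L(p₀, γ₀, λ₀), the latter being equivalent to ∂_γ C(p₀, γ₀) = − d_γ φ(p₀, γ₀)^⊤ λ₀. -/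

import Mathlib

open Matrix

private lemma clm_apply_eq_sum_single {d : ℕ} {E : Type*} [NormedAddCommGroup E]
    [NormedSpace ℝ E] (f : (Fin d → ℝ) →L[ℝ] E) (u : Fin d → ℝ) :
    f u = ∑ k, u k • f (Pi.single k 1) := by
  have h : u = ∑ k, u k • (Pi.single k 1 : Fin d → ℝ) := by
    ext j; simp [Pi.single_apply]
  conv_lhs => rw [h]
  simp

/-- **Gradient of an implicitly constrained objective via the Lagrangian.**
Let `φ(p, γ) = 0` define `γ = γ(p)` implicitly near `p₀` (the Jacobian `d_γ φ` being
invertible at `(p₀, γ₀)`), let `Φ(p) := C(p, γ(p))` and let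
`L(p, γ, λ) := C(p, γ) + ⟨φ(p, γ), λ⟩` be the Lagrangian. Then there is a unique `λ₀`
with `∂_γ C(p₀, γ₀) = − d_γ φ(p₀, γ₀)ᵀ λ₀` (equivalently `∂_γ L(p₀, γ₀, λ₀) = 0`), one has
`∂_λ L(p₀, γ₀, λ₀) = φ(p₀, γ₀) = 0`, and `∂Φ(p₀) = ∂_p L(p₀, γ₀, λ₀)`. -/
theorem lagrangian_gradient
    (np d : ℕ)
    (φ : (Fin np → ℝ) → (Fin d → ℝ) → (Fin d → ℝ))
    (hφ : ContDiff ℝ 1 (fun u : (Fin np → ℝ) × (Fin d → ℝ) => φ u.1 u.2))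
    (p₀ : Fin np → ℝ) (γ₀ : Fin d → ℝ)
    (hroot : φ p₀ γ₀ = 0)
    -- the Jacobian d_γ φ at (p₀, γ₀), assumed invertible
    (J : Matrix (Fin d) (Fin d) ℝ)
    (hJ : HasFDerivAt (fun γ' => φ p₀ γ') (LinearMap.toContinuousLinearMap J.mulVecLin) γ₀)
    (hJinv : IsUnit J)
    -- the implicit function γ(p) near p₀
    (γ : (Fin np → ℝ) → (Fin d → ℝ))
    (hγ₀ : γ p₀ = γ₀)
    (hγroot : ∀ᶠ q in nhds p₀, φ q (γ q) = 0)
    (hγdiff : DifferentiableAt ℝ γ p₀)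
    -- a differentiable objective C
    (C : (Fin np → ℝ) → (Fin d → ℝ) → ℝ)
    (hC : DifferentiableAt ℝ (fun u : (Fin np → ℝ) × (Fin d → ℝ) => C u.1 u.2) (p₀, γ₀)) :
    -- λ₀ is uniquely determined by ∂_γ C(p₀, γ₀) = − d_γ φ(p₀, γ₀)ᵀ λ₀
    (∃! lam₀ : Fin d → ℝ,
      ∀ k, fderiv ℝ (fun g => C p₀ g) γ₀ (Pi.single k 1) = -(Matrix.mulVec Jᵀ lam₀) k) ∧
    (∀ lam₀ : Fin d → ℝ,
      (∀ k, fderiv ℝ (fun g => C p₀ g) γ₀ (Pi.single k 1) = -(Matrix.mulVec Jᵀ lam₀) k) →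
      -- 0 = ∂_λ L(p₀, γ₀, λ₀) = φ(p₀, γ₀)
      (∀ k, fderiv ℝ (fun l : Fin d → ℝ => C p₀ γ₀ + ∑ r, φ p₀ γ₀ r * l r) lam₀
          (Pi.single k 1) = φ p₀ γ₀ k) ∧ φ p₀ γ₀ = 0 ∧
      -- 0 = ∂_γ L(p₀, γ₀, λ₀)
      (∀ k, fderiv ℝ (fun g => C p₀ g + ∑ r, φ p₀ g r * lam₀ r) γ₀ (Pi.single k 1) = 0) ∧
      -- the gradient of Φ(p) = C(p, γ(p)) at p₀ equals ∂_p L(p₀, γ₀, λ₀)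
      DifferentiableAt ℝ (fun q => C q (γ q)) p₀ ∧
      (∀ j, fderiv ℝ (fun q => C q (γ q)) p₀ (Pi.single j 1)
        = fderiv ℝ (fun q => C q γ₀ + ∑ r, φ q γ₀ r * lam₀ r) p₀ (Pi.single j 1))) := by
  classical
  have hJt : IsUnit Jᵀ := (Matrix.isUnit_transpose J).mpr hJinv
  have hinj : Function.Injective Jᵀ.mulVec := Matrix.mulVec_injective_iff_isUnit.mpr hJt
  -- derivative data
  have hDCf : HasFDerivAt (fun u : (Fin np → ℝ) × (Fin d → ℝ) => C u.1 u.2)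
      (fderiv ℝ (fun u : (Fin np → ℝ) × (Fin d → ℝ) => C u.1 u.2) (p₀, γ₀)) (p₀, γ₀) :=
    hC.hasFDerivAt
  set DC := fderiv ℝ (fun u : (Fin np → ℝ) × (Fin d → ℝ) => C u.1 u.2) (p₀, γ₀) with hDCdef
  have hφdiff : DifferentiableAt ℝ (fun u : (Fin np → ℝ) × (Fin d → ℝ) => φ u.1 u.2) (p₀, γ₀) :=
    (hφ.differentiable one_ne_zero).differentiableAt
  have hDφf : HasFDerivAt (fun u : (Fin np → ℝ) × (Fin d → ℝ) => φ u.1 u.2)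
      (fderiv ℝ (fun u : (Fin np → ℝ) × (Fin d → ℝ) => φ u.1 u.2) (p₀, γ₀)) (p₀, γ₀) :=
    hφdiff.hasFDerivAt
  set Dφ := fderiv ℝ (fun u : (Fin np → ℝ) × (Fin d → ℝ) => φ u.1 u.2) (p₀, γ₀) with hDφdef
  -- embeddings
  set L2 : (Fin d → ℝ) →L[ℝ] ((Fin np → ℝ) × (Fin d → ℝ)) :=
    (0 : (Fin d → ℝ) →L[ℝ] (Fin np → ℝ)).prod (ContinuousLinearMap.id ℝ (Fin d → ℝ)) with hL2
  set L1 : (Fin np → ℝ) →L[ℝ] ((Fin np → ℝ) × (Fin d → ℝ)) :=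
    (ContinuousLinearMap.id ℝ (Fin np → ℝ)).prod (0 : (Fin np → ℝ) →L[ℝ] (Fin d → ℝ)) with hL1
  have hembγ : HasFDerivAt (fun g : Fin d → ℝ => ((p₀, g) : (Fin np → ℝ) × (Fin d → ℝ))) L2 γ₀ :=
    (hasFDerivAt_const _ _).prodMk (hasFDerivAt_id _)
  have hembp : HasFDerivAt (fun q : Fin np → ℝ => ((q, γ₀) : (Fin np → ℝ) × (Fin d → ℝ))) L1 p₀ :=
    (hasFDerivAt_id _).prodMk (hasFDerivAt_const _ _)
  -- partial derivative of C in γ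
  have hCγ : HasFDerivAt (fun g => C p₀ g) (DC.comp L2) γ₀ := hDCf.comp γ₀ hembγ
  have hv : ∀ k, fderiv ℝ (fun g => C p₀ g) γ₀ (Pi.single k 1) = DC (0, Pi.single k 1) := by
    intro k; rw [hCγ.fderiv]; rfl
  set v : Fin d → ℝ := fun k => DC (0, Pi.single k 1) with hvdef
  constructor
  · -- existence and uniqueness of lam₀
    have hdet : IsUnit Jᵀ.det := (Matrix.isUnit_iff_isUnit_det _).mp hJt
    have hsol : Jᵀ.mulVec ((Jᵀ)⁻¹.mulVec (-v)) = -v := by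
      rw [Matrix.mulVec_mulVec, Matrix.mul_nonsing_inv _ hdet, Matrix.one_mulVec]
    refine ⟨(Jᵀ)⁻¹.mulVec (-v), fun k => ?_, fun y hy => ?_⟩
    · rw [hv k, hsol]; simp; rfl
    · apply hinj
      have h1 : Jᵀ.mulVec y = -v := by
        ext k
        have := hy k
        rw [hv k] at this
        simp only [Pi.neg_apply] at this ⊢
        linarith
      rw [h1, hsol]
  · intro lam₀ hlam
    have hlam' : ∀ k, DC (0, Pi.single k 1) = -(Jᵀ.mulVec lam₀) k := fun k => by
      rw [← hv k]; exact hlam k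
    -- the linear functional y ↦ ∑ r, y r * lam₀ r
    set ℓ : (Fin d → ℝ) →L[ℝ] ℝ :=
      ∑ r, lam₀ r • ContinuousLinearMap.proj (R := ℝ) (φ := fun _ : Fin d => ℝ) r with hℓdef
    have hℓ : ∀ y : Fin d → ℝ, ℓ y = ∑ r, y r * lam₀ r := by
      intro y
      simp [hℓdef, ContinuousLinearMap.sum_apply, mul_comm]
    refine ⟨?_, hroot, ?_, ?_, ?_⟩
    · -- ∂_λ L
      intro k
      have hfun : (fun l : Fin d → ℝ => C p₀ γ₀ + ∑ r, φ p₀ γ₀ r * l r)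
          = fun _ => C p₀ γ₀ := by
        funext l; simp [hroot]
      rw [hfun, fderiv_const_apply]
      simp [hroot]
    · -- ∂_γ L = 0
      intro k
      have hsum : HasFDerivAt (fun g => ∑ r, φ p₀ g r * lam₀ r)
          (ℓ.comp (LinearMap.toContinuousLinearMap J.mulVecLin)) γ₀ := by
        have h0 : HasFDerivAt (fun g => ℓ (φ p₀ g))
            (ℓ.comp (LinearMap.toContinuousLinearMap J.mulVecLin)) γ₀ :=
          (ℓ.hasFDerivAt).comp γ₀ hJ
        have h2 : (fun g => ℓ (φ p₀ g)) = fun g => ∑ r, φ p₀ g r * lam₀ r :=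
          funext fun g => hℓ _
        rwa [h2] at h0
      have htot : HasFDerivAt (fun g => C p₀ g + ∑ r, φ p₀ g r * lam₀ r)
          ((DC.comp L2) + ℓ.comp (LinearMap.toContinuousLinearMap J.mulVecLin)) γ₀ :=
        hCγ.add hsum
      rw [htot.fderiv]
      have hmul : J.mulVec (Pi.single k 1) = fun r => J r k := by
        ext r; simp [Matrix.mulVec, dotProduct, Pi.single_apply, mul_ite]
      have : ℓ (J.mulVec (Pi.single k 1)) = (Jᵀ.mulVec lam₀) k := by
        rw [hℓ, hmul]
        simp [Matrix.mulVec, dotProduct, Matrix.transpose_apply]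
      simp only [ContinuousLinearMap.add_apply, ContinuousLinearMap.comp_apply]
      have he : L2 (Pi.single k 1) = (0, Pi.single k 1) := rfl
      rw [he, hlam' k]
      have he2 : (LinearMap.toContinuousLinearMap J.mulVecLin) (Pi.single k 1)
          = J.mulVec (Pi.single k 1) := rfl
      rw [he2, this]
      simp
    · -- differentiability of Φ
      have hDCf' : HasFDerivAt (fun u : (Fin np → ℝ) × (Fin d → ℝ) => C u.1 u.2) DC (p₀, γ p₀) := by
        rw [hγ₀]; exact hDCf
      have hembq : HasFDerivAt (fun q => ((q, γ q) : (Fin np → ℝ) × (Fin d → ℝ)))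
          ((ContinuousLinearMap.id ℝ (Fin np → ℝ)).prod (fderiv ℝ γ p₀)) p₀ :=
        (hasFDerivAt_id _).prodMk hγdiff.hasFDerivAt
      exact (hDCf'.comp p₀ hembq).differentiableAt
    · -- the gradient identity
      intro j
      set Dγc := fderiv ℝ γ p₀ with hDγc
      have hγd : HasFDerivAt γ Dγc p₀ := hγdiff.hasFDerivAt
      have hembq : HasFDerivAt (fun q => ((q, γ q) : (Fin np → ℝ) × (Fin d → ℝ)))
          ((ContinuousLinearMap.id ℝ (Fin np → ℝ)).prod Dγc) p₀ :=
        (hasFDerivAt_id _).prodMk hγd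
      have hDCf' : HasFDerivAt (fun u : (Fin np → ℝ) × (Fin d → ℝ) => C u.1 u.2) DC (p₀, γ p₀) := by
        rw [hγ₀]; exact hDCf
      have hDφf' : HasFDerivAt (fun u : (Fin np → ℝ) × (Fin d → ℝ) => φ u.1 u.2) Dφ (p₀, γ p₀) := by
        rw [hγ₀]; exact hDφf
      have hΦ : HasFDerivAt (fun q => C q (γ q))
          (DC.comp ((ContinuousLinearMap.id ℝ (Fin np → ℝ)).prod Dγc)) p₀ :=
        by have := hDCf'.comp p₀ hembq; exact this
      have hchainφ : HasFDerivAt (fun q => φ q (γ q))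
          (Dφ.comp ((ContinuousLinearMap.id ℝ (Fin np → ℝ)).prod Dγc)) p₀ :=
        by have := hDφf'.comp p₀ hembq; exact this
      -- fderiv of eventually-zero map is 0
      have hzero : Dφ.comp ((ContinuousLinearMap.id ℝ (Fin np → ℝ)).prod Dγc) = 0 := by
        have heq : (fun q => φ q (γ q)) =ᶠ[nhds p₀] (fun _ => (0 : Fin d → ℝ)) := hγroot
        have := hchainφ.fderiv
        rw [heq.fderiv_eq, fderiv_const_apply] at this
        exact this.symm ▸ rfl
      have hkey : ∀ w, Dφ (w, Dγc w) = 0 := by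
        intro w
        have : (Dφ.comp ((ContinuousLinearMap.id ℝ (Fin np → ℝ)).prod Dγc)) w = 0 := by
          rw [hzero]; rfl
        simpa using this
      -- partial derivative of φ in γ equals J
      have hφγ2 : HasFDerivAt (fun g => φ p₀ g) (Dφ.comp L2) γ₀ := hDφf.comp γ₀ hembγ
      have hpartγ : ∀ u, Dφ (0, u) = J.mulVec u := by
        intro u
        have h3 : Dφ.comp L2 = LinearMap.toContinuousLinearMap J.mulVecLin := hφγ2.unique hJ
        have : (Dφ.comp L2) u = J.mulVec u := by rw [h3]; rfl
        simpa [hL2] using this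
      have hDp : ∀ w, Dφ (w, 0) = -(J.mulVec (Dγc w)) := by
        intro w
        have hsplit : Dφ (w, Dγc w) = Dφ (w, 0) + Dφ (0, Dγc w) := by
          rw [← map_add]; norm_num
        have h0 := hkey w
        rw [hsplit] at h0
        have := eq_neg_of_add_eq_zero_left h0
        rw [this, hpartγ]
      -- RHS derivative
      have hCp : HasFDerivAt (fun q => C q γ₀) (DC.comp L1) p₀ := by have := hDCf.comp p₀ hembp; exact this
      have hφp : HasFDerivAt (fun q => φ q γ₀) (Dφ.comp L1) p₀ := by have := hDφf.comp p₀ hembp; exact this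
      have hsump : HasFDerivAt (fun q => ∑ r, φ q γ₀ r * lam₀ r) (ℓ.comp (Dφ.comp L1)) p₀ := by
        have h0 : HasFDerivAt (fun q => ℓ (φ q γ₀)) (ℓ.comp (Dφ.comp L1)) p₀ :=
          (ℓ.hasFDerivAt).comp p₀ hφp
        have h2 : (fun q => ℓ (φ q γ₀)) = fun q => ∑ r, φ q γ₀ r * lam₀ r :=
          funext fun q => hℓ _
        rwa [h2] at h0
      have hRHS : HasFDerivAt (fun q => C q γ₀ + ∑ r, φ q γ₀ r * lam₀ r)
          ((DC.comp L1) + ℓ.comp (Dφ.comp L1)) p₀ := hCp.add hsump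
      rw [hΦ.fderiv, hRHS.fderiv]
      set w : Fin np → ℝ := Pi.single j 1 with hw
      set u : Fin d → ℝ := Dγc w with hu
      have hLHS1 : (DC.comp ((ContinuousLinearMap.id ℝ (Fin np → ℝ)).prod Dγc)) w
          = DC (w, u) := rfl
      have hRHS1 : ((DC.comp L1) + ℓ.comp (Dφ.comp L1)) w = DC (w, 0) + ℓ (Dφ (w, 0)) := rfl
      rw [hLHS1, hRHS1]
      have hsplit : DC (w, u) = DC (w, 0) + DC (0, u) := by
        rw [← map_add]; norm_num
      rw [hsplit]
      congr 1
      -- DC (0, u) = ℓ (Dφ (w, 0))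
      have hDC0u : DC (0, u) = ∑ k, u k * (-(Jᵀ.mulVec lam₀) k) := by
        have h4 : (DC.comp L2) u = ∑ k, u k • (DC.comp L2) (Pi.single k 1) :=
          clm_apply_eq_sum_single (DC.comp L2) u
        have h5 : (DC.comp L2) u = DC (0, u) := rfl
        rw [h5] at h4
        rw [h4]
        refine Finset.sum_congr rfl fun k _ => ?_
        have h6 : (DC.comp L2) (Pi.single k 1) = DC (0, Pi.single k 1) := rfl
        rw [h6, hlam' k, smul_eq_mul]
      have hr : ℓ (Dφ (w, 0)) = -∑ r, (J.mulVec u) r * lam₀ r := by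
        rw [hDp w, ← hu, map_neg, hℓ]
      rw [hDC0u, hr]
      have hswap : ∑ k, u k * (Jᵀ.mulVec lam₀) k = ∑ r, (J.mulVec u) r * lam₀ r := by
        simp only [Matrix.mulVec, dotProduct, Matrix.transpose_apply,
          Finset.sum_mul, Finset.mul_sum]
        rw [Finset.sum_comm]
        exact Finset.sum_congr rfl fun k _ => Finset.sum_congr rfl fun r _ => by ring
      rw [← hswap]
      simp [mul_neg, Finset.sum_neg_distrib]
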